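/- Let G be a finite simple undirected graph, let s and t be two distinct vertices of G, and let p ≥ 1 and k ≥ 1 be integers. Let G' be the graph obtained from G by adding k new vertices u_1, …, u_k and the edges {s,u_1}, {u_1,u_2}, …, {u_{k−1},u_k}, {u_k,t}, i.e., a path of length k+1 between s and t whose internal vertices are new. Then G admits a (p,s,t)-routing with at most k shared edges if and only if G' admits a (p+1,s,t)-routing with at most k shared edges. -/

import Mathlib

/-- The set of edges shared by at least two paths of the routing `P`. -/
def mseSharedEdges {V : Type*} {G : SimpleGraph V} {s t : V} {p : ℕ}
    (P : Fin p → G.Walk s t) : Set (Sym2 V) :=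
  {e | ∃ i j : Fin p, i ≠ j ∧ e ∈ (P i).edges ∧ e ∈ (P j).edges}

/-- The graph obtained from `G` by adding `k` new vertices `u_1, …, u_k` forming a
path `s, u_1, …, u_k, t` of length `k+1` between `s` and `t`. -/
def mseExtGraph {V : Type*} (G : SimpleGraph V) (s t : V) (k : ℕ) :
    SimpleGraph (V ⊕ Fin k) :=
  SimpleGraph.fromRel (fun x y =>
    (∃ a b : V, G.Adj a b ∧ x = Sum.inl a ∧ y = Sum.inl b) ∨
    (∃ i : Fin k, (i : ℕ) = 0 ∧ x = Sum.inl s ∧ y = Sum.inr i) ∨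
    (∃ i j : Fin k, (j : ℕ) = (i : ℕ) + 1 ∧ x = Sum.inr i ∧ y = Sum.inr j) ∨
    (∃ i : Fin k, (i : ℕ) = k - 1 ∧ x = Sum.inr i ∧ y = Sum.inl t))

namespace MSEAux

open SimpleGraph Sum

variable {V : Type*} {G : SimpleGraph V} {s t : V} {k : ℕ}

lemma adj_inl_inl {a b : V} :
    (mseExtGraph G s t k).Adj (Sum.inl a) (Sum.inl b) ↔ G.Adj a b := by
  rw [mseExtGraph, SimpleGraph.fromRel_adj]
  constructor
  · rintro ⟨hne, h | h⟩ <;>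
      rcases h with ⟨a', b', hab, h1, h2⟩ | ⟨i, _, _, h⟩ | ⟨i, j, _, h, _⟩ | ⟨i, _, h, _⟩ <;>
      simp_all <;> exact hab.symm
  · intro h
    exact ⟨by simpa using h.ne, Or.inl (Or.inl ⟨a, b, h, rfl, rfl⟩)⟩

lemma adj_s0 (h0 : 0 < k) :
    (mseExtGraph G s t k).Adj (Sum.inl s) (Sum.inr ⟨0, h0⟩) := by
  rw [mseExtGraph, SimpleGraph.fromRel_adj]
  exact ⟨by simp, Or.inl (Or.inr (Or.inl ⟨⟨0, h0⟩, rfl, rfl, rfl⟩))⟩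

lemma adj_step {m : ℕ} (h : m < k) (h2 : m + 1 < k) :
    (mseExtGraph G s t k).Adj (Sum.inr ⟨m, h⟩) (Sum.inr ⟨m + 1, h2⟩) := by
  rw [mseExtGraph, SimpleGraph.fromRel_adj]
  refine ⟨by simp [Fin.ext_iff], Or.inl (Or.inr (Or.inr (Or.inl ⟨⟨m, h⟩, ⟨m+1, h2⟩, rfl, rfl, rfl⟩)))⟩

lemma adj_last {m : ℕ} (h : m < k) (h2 : ¬ m + 1 < k) :
    (mseExtGraph G s t k).Adj (Sum.inr ⟨m, h⟩) (Sum.inl t) := by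
  rw [mseExtGraph, SimpleGraph.fromRel_adj]
  exact ⟨by simp, Or.inl (Or.inr (Or.inr (Or.inr ⟨⟨m, h⟩, by simp; omega, rfl, rfl⟩)))⟩

/-- Successor of internal vertex `u_{i+1}` on the new path. -/
def nxt (t : V) {k : ℕ} (i : Fin k) : V ⊕ Fin k :=
  if h : (i : ℕ) + 1 < k then Sum.inr ⟨(i : ℕ) + 1, h⟩ else Sum.inl t

/-- Predecessor of internal vertex `u_{i+1}` on the new path. -/
def prv (s : V) {k : ℕ} (i : Fin k) : V ⊕ Fin k :=
  if h : 0 < (i : ℕ) then Sum.inr ⟨(i : ℕ) - 1, lt_of_le_of_lt (Nat.sub_le _ _) i.isLt⟩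
  else Sum.inl s

lemma adj_inr {i : Fin k} {z : V ⊕ Fin k}
    (h : (mseExtGraph G s t k).Adj (Sum.inr i) z) : z = prv s i ∨ z = nxt t i := by
  rw [mseExtGraph, SimpleGraph.fromRel_adj] at h
  obtain ⟨hne, h | h⟩ := h
  · rcases h with ⟨a', b', hab, h1, h2⟩ | ⟨i', _, h, _⟩ | ⟨i', j, hj, h1, h2⟩ | ⟨i', hi', h1, h2⟩
    · exact absurd h1 (by simp)
    · exact absurd h (by simp)
    · right
      cases Sum.inr.inj h1
      have hjk : (i : ℕ) + 1 < k := hj ▸ j.isLt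
      rw [nxt, dif_pos hjk, h2]
      congr 1
      exact Fin.ext hj
    · right
      cases Sum.inr.inj h1
      have hik : (i : ℕ) = k - 1 := by simpa using hi'
      have : ¬ (i : ℕ) + 1 < k := by omega
      rw [nxt, dif_neg this, h2]
  · rcases h with ⟨a', b', hab, h1, h2⟩ | ⟨i', hi', h1, h2⟩ | ⟨i', j, hj, h1, h2⟩ | ⟨i', hi', h1, h2⟩
    · exact absurd h2 (by simp)
    · left
      cases Sum.inr.inj h2
      rw [prv, dif_neg (by omega), h1]
    · left
      cases Sum.inr.inj h2
      have hpos : 0 < (i : ℕ) := by omega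
      rw [prv, dif_pos hpos, h1]
      congr 1
      exact Fin.ext (by simp only [Fin.val_mk]; omega)
    · exact absurd h2 (by simp)

lemma both_edges {w : (mseExtGraph G s t k).Walk (Sum.inl s) (Sum.inl t)} (hw : w.IsPath)
    {i : Fin k} (hi : Sum.inr i ∈ w.support) :
    s(Sum.inr i, prv s i) ∈ w.edges ∧ s(Sum.inr i, nxt t i) ∈ w.edges := by
  classical
  suffices H : ∀ (q : (mseExtGraph G s t k).Walk (Sum.inr i) (Sum.inl s))
      (r : (mseExtGraph G s t k).Walk (Sum.inr i) (Sum.inl t)),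
      (q.reverse.append r).IsPath →
      s(Sum.inr i, prv s i) ∈ (q.reverse.append r).edges ∧
      s(Sum.inr i, nxt t i) ∈ (q.reverse.append r).edges by
    have h1 : ((w.takeUntil _ hi).reverse.reverse.append (w.dropUntil _ hi)) = w := by
      rw [SimpleGraph.Walk.reverse_reverse, w.take_spec hi]
    have := H (w.takeUntil _ hi).reverse (w.dropUntil _ hi) (by rw [h1]; exact hw)
    rwa [h1] at this
  intro q r hp
  cases q with
  | cons hy qy =>
    cases r with
    | cons hx rx =>
      rename_i y x
      have hmemy : s(Sum.inr i, y) ∈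
          ((SimpleGraph.Walk.cons hy qy).reverse.append (SimpleGraph.Walk.cons hx rx)).edges := by
        rw [SimpleGraph.Walk.edges_append, List.mem_append]
        left
        rw [SimpleGraph.Walk.edges_reverse, List.mem_reverse]
        simp
      have hmemx : s(Sum.inr i, x) ∈
          ((SimpleGraph.Walk.cons hy qy).reverse.append (SimpleGraph.Walk.cons hx rx)).edges := by
        rw [SimpleGraph.Walk.edges_append, List.mem_append]
        right
        simp
      have hnodup := hp.support_nodup
      rw [SimpleGraph.Walk.support_append] at hnodup
      have hdisj := List.disjoint_of_nodup_append hnodup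
      have hyq : y ∈ (SimpleGraph.Walk.cons hy qy).reverse.support := by
        rw [SimpleGraph.Walk.support_reverse, List.mem_reverse]
        simp [SimpleGraph.Walk.start_mem_support]
      have hxr : x ∈ ((SimpleGraph.Walk.cons hx rx).support).tail := by
        simp [SimpleGraph.Walk.start_mem_support]
      have hxy : x ≠ y := fun h => hdisj hyq (h ▸ hxr)
      rcases adj_inr hy with h1 | h1 <;> rcases adj_inr hx with h2 | h2
      · exact absurd (h2.trans h1.symm) hxy
      · exact ⟨h1 ▸ hmemy, h2 ▸ hmemx⟩
      · exact ⟨h2 ▸ hmemx, h1 ▸ hmemy⟩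
      · exact absurd (h2.trans h1.symm) hxy

lemma inr_mem_support_all {w : (mseExtGraph G s t k).Walk (Sum.inl s) (Sum.inl t)}
    (hw : w.IsPath) {x : Fin k} (hx : Sum.inr x ∈ w.support) :
    ∀ j : Fin k, Sum.inr j ∈ w.support := by
  have down : ∀ n : ℕ, ∀ h : n < k, Sum.inr (⟨n, h⟩ : Fin k) ∈ w.support →
      ∀ h0 : 0 < k, Sum.inr (⟨0, h0⟩ : Fin k) ∈ w.support := by
    intro n
    induction n with
    | zero => intro h hmem h0; exact hmem
    | succ m ih =>
      intro h hmem h0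
      have hb := (both_edges hw hmem).1
      have hprv : prv s (⟨m + 1, h⟩ : Fin k) = Sum.inr ⟨m, by omega⟩ := by
        rw [prv, dif_pos (by simp)]
        congr 1
      rw [hprv] at hb
      exact ih (by omega) (SimpleGraph.Walk.snd_mem_support_of_mem_edges _ hb) h0
  have up : ∀ n : ℕ, ∀ h : n < k, Sum.inr (⟨n, h⟩ : Fin k) ∈ w.support := by
    intro n
    induction n with
    | zero => intro h; exact down x.1 x.2 (by simpa using hx) h
    | succ m ih =>
      intro h
      have hmem := ih (by omega)
      have hb := (both_edges hw hmem).2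
      have hnxt : nxt t (⟨m, by omega⟩ : Fin k) = Sum.inr ⟨m + 1, h⟩ := by
        rw [nxt, dif_pos (by simpa using h)]
      rw [hnxt] at hb
      exact SimpleGraph.Walk.snd_mem_support_of_mem_edges _ hb
  intro j
  simpa using up j.1 j.2

/-- The `k+1` edges of the new path. -/
def F (s t : V) (k : ℕ) (hk : 0 < k) : Fin (k + 1) → Sym2 (V ⊕ Fin k) :=
  fun m => if h : (m : ℕ) < k then s(Sum.inr ⟨(m : ℕ), h⟩, nxt t ⟨(m : ℕ), h⟩)
           else s(Sum.inl s, Sum.inr ⟨0, hk⟩)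

lemma F_mem_edges (hk : 0 < k) {w : (mseExtGraph G s t k).Walk (Sum.inl s) (Sum.inl t)}
    (hw : w.IsPath) (hx : ∃ x : Fin k, Sum.inr x ∈ w.support) :
    ∀ m : Fin (k + 1), F s t k hk m ∈ w.edges := by
  obtain ⟨x, hx⟩ := hx
  have hall := inr_mem_support_all hw hx
  intro m
  by_cases h : (m : ℕ) < k
  · rw [F, dif_pos h]
    exact (both_edges hw (hall ⟨(m : ℕ), h⟩)).2
  · rw [F, dif_neg h]
    have hb := (both_edges hw (hall ⟨0, hk⟩)).1
    have hprv : prv s (⟨0, hk⟩ : Fin k) = Sum.inl s := by rw [prv, dif_neg (by simp)]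
    rw [hprv] at hb
    rwa [Sym2.eq_swap]

lemma F_inj (hst : s ≠ t) (hk : 0 < k) : Function.Injective (F s t k hk) := by
  intro m m' hmm
  simp only [F] at hmm
  split_ifs at hmm with h h' h''
  · rw [Sym2.eq_iff] at hmm
    rcases hmm with ⟨h1, h2⟩ | ⟨h1, h2⟩
    · have := Sum.inr.inj h1
      exact Fin.ext (by simpa [Fin.ext_iff] using this)
    · rw [nxt] at h1 h2
      split_ifs at h1 h2 <;> simp_all [Fin.ext_iff] <;> omega
  · rw [Sym2.eq_iff] at hmm
    rcases hmm with ⟨h1, h2⟩ | ⟨h1, h2⟩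
    · exact absurd h1 (by simp)
    · rw [nxt] at h2
      split_ifs at h2 <;> simp_all
  · rw [Sym2.eq_iff] at hmm
    rcases hmm with ⟨h1, h2⟩ | ⟨h1, h2⟩
    · exact absurd h1 (by simp)
    · rw [nxt] at h1
      split_ifs at h1 <;> simp_all
  · have hm : (m : ℕ) = k := by omega
    have hm' : (m' : ℕ) = k := by omega
    exact Fin.ext (by omega)

/-- The embedding of `G` into the extended graph. -/
@[reducible]
def homInl (G : SimpleGraph V) (s t : V) (k : ℕ) : G →g mseExtGraph G s t k where
  toFun := Sum.inl
  map_rel' := fun h => adj_inl_inl.mpr h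

lemma pull_exists {x y : V ⊕ Fin k} (w : (mseExtGraph G s t k).Walk x y) (a b : V)
    (hx : x = Sum.inl a) (hy : y = Sum.inl b) (hs : ∀ z ∈ w.support, z.isLeft = true) :
    ∃ w' : G.Walk a b, w'.map (homInl G s t k) = w.copy hx hy := by
  induction w generalizing a b with
  | nil =>
    obtain rfl : a = b := Sum.inl.inj (hx.symm.trans hy)
    subst hx
    exact ⟨SimpleGraph.Walk.nil, by simp⟩
  | cons h q ih =>
    rename_i u v y'
    subst hx
    have hv : v.isLeft = true := hs v (by
      rw [SimpleGraph.Walk.support_cons]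
      exact List.mem_cons_of_mem _ q.start_mem_support)
    obtain ⟨c, rfl⟩ : ∃ c, v = Sum.inl c := by
      cases v
      · exact ⟨_, rfl⟩
      · simp at hv
    obtain ⟨w', hw'⟩ := ih c b rfl hy (fun z hz => hs z (by
      rw [SimpleGraph.Walk.support_cons]
      exact List.mem_cons_of_mem _ hz))
    refine ⟨SimpleGraph.Walk.cons (adj_inl_inl.mp h) w', ?_⟩
    rw [SimpleGraph.Walk.map_cons, hw']
    simp [homInl]

/-- The tail of the new path, from `u_{m+1}` to `t`, with `r` remaining internal vertices. -/
def tailWalk (G : SimpleGraph V) (s t : V) (k : ℕ) :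
    (r : ℕ) → (m : ℕ) → (h : m < k) → (hr : m + r + 1 = k) →
      (mseExtGraph G s t k).Walk (Sum.inr ⟨m, h⟩) (Sum.inl t)
  | 0, m, h, hr => SimpleGraph.Walk.cons (adj_last h (by omega)) SimpleGraph.Walk.nil
  | r + 1, m, h, hr =>
      SimpleGraph.Walk.cons (adj_step h (by omega))
        (tailWalk G s t k r (m + 1) (by omega) (by omega))

lemma tailWalk_support : ∀ (r m : ℕ) (h : m < k) (hr : m + r + 1 = k)
    (z : V ⊕ Fin k), z ∈ (tailWalk G s t k r m h hr).support →
    z = Sum.inl t ∨ ∃ j : Fin k, m ≤ (j : ℕ) ∧ z = Sum.inr j := by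
  intro r
  induction r with
  | zero =>
    intro m h hr z hz
    rw [tailWalk] at hz
    simp only [SimpleGraph.Walk.support_cons, SimpleGraph.Walk.support_nil,
      List.mem_cons, List.not_mem_nil, or_false] at hz
    rcases hz with rfl | rfl
    · exact Or.inr ⟨⟨m, h⟩, le_refl _, rfl⟩
    · exact Or.inl rfl
  | succ r ih =>
    intro m h hr z hz
    rw [tailWalk] at hz
    simp only [SimpleGraph.Walk.support_cons, List.mem_cons] at hz
    rcases hz with rfl | hz
    · exact Or.inr ⟨⟨m, h⟩, le_refl _, rfl⟩
    · rcases ih (m + 1) (by omega) (by omega) z hz with h' | ⟨j, hj, h'⟩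
      · exact Or.inl h'
      · exact Or.inr ⟨j, by omega, h'⟩

lemma tailWalk_isPath : ∀ (r m : ℕ) (h : m < k) (hr : m + r + 1 = k),
    (tailWalk G s t k r m h hr).IsPath := by
  intro r
  induction r with
  | zero =>
    intro m h hr
    rw [tailWalk]
    simp
  | succ r ih =>
    intro m h hr
    rw [tailWalk]
    rw [SimpleGraph.Walk.cons_isPath_iff]
    refine ⟨ih _ _ _, fun hmem => ?_⟩
    rcases tailWalk_support _ _ _ _ _ hmem with h' | ⟨j, hj, h'⟩
    · exact absurd h' (by simp)
    · have := Sum.inr.inj h'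
      simp [Fin.ext_iff] at this
      omega

lemma tailWalk_edges : ∀ (r m : ℕ) (h : m < k) (hr : m + r + 1 = k)
    (e : Sym2 (V ⊕ Fin k)), e ∈ (tailWalk G s t k r m h hr).edges →
    ∃ j : Fin k, Sum.inr j ∈ e := by
  intro r
  induction r with
  | zero =>
    intro m h hr e he
    rw [tailWalk] at he
    simp only [SimpleGraph.Walk.edges_cons, SimpleGraph.Walk.edges_nil,
      List.mem_cons, List.not_mem_nil, or_false] at he
    subst he
    exact ⟨⟨m, h⟩, by simp⟩
  | succ r ih =>
    intro m h hr e he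
    rw [tailWalk] at he
    simp only [SimpleGraph.Walk.edges_cons, List.mem_cons] at he
    rcases he with rfl | he
    · exact ⟨⟨m, h⟩, by simp⟩
    · exact ih _ _ _ _ he

/-- The new path `s, u_1, …, u_k, t` as a walk in the extended graph. -/
def newWalk (G : SimpleGraph V) (s t : V) (k : ℕ) (hk : 0 < k) :
    (mseExtGraph G s t k).Walk (Sum.inl s) (Sum.inl t) :=
  SimpleGraph.Walk.cons (adj_s0 hk) (tailWalk G s t k (k - 1) 0 hk (by omega))

lemma newWalk_isPath (hst : s ≠ t) (hk : 0 < k) : (newWalk G s t k hk).IsPath := by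
  rw [newWalk, SimpleGraph.Walk.cons_isPath_iff]
  refine ⟨tailWalk_isPath _ _ _ _, fun hmem => ?_⟩
  rcases tailWalk_support _ _ _ _ _ hmem with h' | ⟨j, hj, h'⟩
  · exact hst (Sum.inl.inj h')
  · exact absurd h' (by simp)

lemma newWalk_edges (hk : 0 < k) {e : Sym2 (V ⊕ Fin k)} (he : e ∈ (newWalk G s t k hk).edges) :
    ∃ j : Fin k, Sum.inr j ∈ e := by
  rw [newWalk] at he
  simp only [SimpleGraph.Walk.edges_cons, List.mem_cons] at he
  rcases he with rfl | he
  · exact ⟨⟨0, hk⟩, by simp⟩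
  · exact tailWalk_edges _ _ _ _ _ he

lemma no_inr_in_map_edges {a b : V} (w : G.Walk a b) {e : Sym2 (V ⊕ Fin k)}
    (he : e ∈ (w.map (homInl G s t k)).edges) (j : Fin k) : Sum.inr j ∉ e := by
  rw [SimpleGraph.Walk.edges_map] at he
  obtain ⟨e', _, rfl⟩ := List.mem_map.mp he
  intro hj
  rw [Sym2.mem_map] at hj
  obtain ⟨a', _, ha'⟩ := hj
  exact absurd ha' (by simp [homInl])

end MSEAux

open MSEAux Sum in
theorem stmt_10 {V : Type*} [Fintype V] (G : SimpleGraph V) (s t : V) (hst : s ≠ t)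
    (p k : ℕ) (hp : 1 ≤ p) (hk : 1 ≤ k) :
    (∃ P : Fin p → G.Walk s t,
      (∀ i, (P i).IsPath) ∧ (mseSharedEdges P).ncard ≤ k) ↔
    (∃ P : Fin (p + 1) → (mseExtGraph G s t k).Walk (Sum.inl s) (Sum.inl t),
      (∀ i, (P i).IsPath) ∧ (mseSharedEdges P).ncard ≤ k) := by
  classical
  have hk0 : 0 < k := hk
  constructor
  · rintro ⟨P, hP, hcard⟩
    refine ⟨fun i => if h : (i : ℕ) < p then (P ⟨i, h⟩).map (homInl G s t k)
      else newWalk G s t k hk0, fun i => ?_, ?_⟩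
    · dsimp only
      split_ifs with h
      · exact SimpleGraph.Walk.map_isPath_of_injective Sum.inl_injective (hP _)
      · exact newWalk_isPath hst hk0
    · have hsub : mseSharedEdges (fun i : Fin (p + 1) =>
          if h : (i : ℕ) < p then (P ⟨i, h⟩).map (homInl G s t k) else newWalk G s t k hk0) ⊆
          (Sym2.map Sum.inl) '' mseSharedEdges P := by
        rintro e ⟨i, j, hij, hei, hej⟩
        dsimp only at hei hej
        by_cases hi : (i : ℕ) < p
        · by_cases hj : (j : ℕ) < p
          · rw [dif_pos hi, SimpleGraph.Walk.edges_map] at hei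
            rw [dif_pos hj, SimpleGraph.Walk.edges_map] at hej
            obtain ⟨e1, he1, rfl⟩ := List.mem_map.mp hei
            obtain ⟨e2, he2, he⟩ := List.mem_map.mp hej
            have : e2 = e1 := Sym2.map.injective Sum.inl_injective he
            subst this
            refine ⟨e2, ⟨⟨i, hi⟩, ⟨j, hj⟩, fun hc => hij (Fin.ext (by
              simpa [Fin.ext_iff] using hc)), he1, he2⟩, rfl⟩
          · rw [dif_neg hj] at hej
            obtain ⟨j', hj'⟩ := newWalk_edges hk0 hej
            rw [dif_pos hi] at hei
            exact absurd hj' (no_inr_in_map_edges _ hei j')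
        · rw [dif_neg hi] at hei
          obtain ⟨i', hi'⟩ := newWalk_edges hk0 hei
          have hj : (j : ℕ) < p := by
            rcases Nat.lt_or_ge (j : ℕ) p with h' | h'
            · exact h'
            · exact absurd (Fin.ext (by omega : (i : ℕ) = (j : ℕ))) hij
          rw [dif_pos hj] at hej
          exact absurd hi' (no_inr_in_map_edges _ hej i')
      calc (mseSharedEdges _).ncard
          ≤ ((Sym2.map Sum.inl) '' mseSharedEdges P).ncard :=
            Set.ncard_le_ncard hsub (Set.toFinite _)
        _ = (mseSharedEdges P).ncard :=
            Set.ncard_image_of_injective _ (Sym2.map.injective Sum.inl_injective)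
        _ ≤ k := hcard
  · rintro ⟨P, hP, hcard⟩
    set visits : Fin (p + 1) → Prop := fun i => ∃ x : Fin k, Sum.inr x ∈ (P i).support with hvis
    have hone : ∀ i j, i ≠ j → visits i → visits j → False := by
      intro i j hij hi hj
      have hsub : Set.range (F s t k hk0) ⊆ mseSharedEdges P := by
        rintro e ⟨m, rfl⟩
        exact ⟨i, j, hij, F_mem_edges hk0 (hP i) hi m, F_mem_edges hk0 (hP j) hj m⟩
      have h1 : (Set.range (F s t k hk0)).ncard = k + 1 := by
        rw [← Set.image_univ, Set.ncard_image_of_injective _ (F_inj hst hk0), Set.ncard_univ]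
        simp
      have h2 := Set.ncard_le_ncard hsub (Set.toFinite _)
      omega
    obtain ⟨i₀, hi₀⟩ : ∃ i₀ : Fin (p + 1), ∀ i, visits i → i = i₀ := by
      rcases Classical.em (∃ i, visits i) with h | h
      case inl =>
        obtain ⟨i₀, hv⟩ := h
        exact ⟨i₀, fun i hi => by_contra fun hne => hone i i₀ hne hi hv⟩
      case inr => exact ⟨⟨0, by omega⟩, fun i hi => absurd ⟨i, hi⟩ h⟩
    have hno : ∀ j : Fin p, ∀ z ∈ (P (i₀.succAbove j)).support, z.isLeft = true := by
      intro j z hz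
      cases z with
      | inl => rfl
      | inr x => exact absurd (hi₀ _ ⟨x, hz⟩) (Fin.succAbove_ne i₀ j)
    choose Q hQ using fun j : Fin p => pull_exists (P (i₀.succAbove j)) s t rfl rfl (hno j)
    simp only [SimpleGraph.Walk.copy_rfl_rfl] at hQ
    refine ⟨Q, fun j => ?_, ?_⟩
    · have := hP (i₀.succAbove j)
      rw [← hQ j] at this
      exact this.of_map
    · have hsub : (Sym2.map Sum.inl) '' mseSharedEdges Q ⊆ mseSharedEdges P := by
        rintro e ⟨e', ⟨a, b, hab, ha, hb⟩, rfl⟩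
        refine ⟨i₀.succAbove a, i₀.succAbove b,
          fun hc => hab (Fin.succAbove_right_injective hc), ?_, ?_⟩
        · rw [← hQ a, SimpleGraph.Walk.edges_map]
          exact List.mem_map_of_mem ha
        · rw [← hQ b, SimpleGraph.Walk.edges_map]
          exact List.mem_map_of_mem hb
      have h2 := Set.ncard_le_ncard hsub (Set.toFinite _)
      rw [Set.ncard_image_of_injective _ (Sym2.map.injective Sum.inl_injective)] at h2
      exact h2.trans hcard
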